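/- (Polynomial decay of the energy gap along a gradient flow satisfying a Łojasiewicz inequality.) Let H be a real Hilbert space, U ⊆ H open, and E : U → ℝ a Fréchet differentiable function with gradient ∇E. Let u : [0,∞) → U be a C¹ curve with u'(t) = -∇E(u(t)) for all t ≥ 0. Suppose there exist E∞ ∈ ℝ, α ∈ (0,1) and C > 0 such that for all t ≥ 0 one has E(u(t)) > E∞ and (E(u(t)) - E∞)^{1-α/2} ≤ C·‖∇E(u(t))‖. Then for all t > 0, E(u(t)) - E∞ ≤ (C²/((1-α)·t))^{1/(1-α)}. -/

import Mathlib

open Real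

/-- Polynomial decay of the energy gap along a gradient flow satisfying a
Łojasiewicz inequality. Along a negative gradient flow trajectory `u` of a Fréchet
differentiable function `E` on an open subset of a real Hilbert space, if `E(u t) > Elim`
and `(E(u t) - Elim)^(1-α/2) ≤ C·‖∇E(u t)‖` for all `t ≥ 0`, then
`E(u t) - Elim ≤ (C²/((1-α)·t))^(1/(1-α))` for all `t > 0`. -/
theorem gradient_flow_energy_gap_polynomial_decay
    {H : Type*} [NormedAddCommGroup H] [InnerProductSpace ℝ H] [CompleteSpace H]
    (U : Set H) (hU : IsOpen U) (E : H → ℝ)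
    (hE : ∀ x ∈ U, DifferentiableAt ℝ E x)
    (u : ℝ → H)
    (hmem : ∀ t : ℝ, 0 ≤ t → u t ∈ U)
    (hflow : ∀ t : ℝ, 0 ≤ t → HasDerivAt u (-(gradient E (u t))) t)
    (Elim α C : ℝ) (hα : α ∈ Set.Ioo (0 : ℝ) 1) (hC : 0 < C)
    (hgt : ∀ t : ℝ, 0 ≤ t → Elim < E (u t))
    (hloj : ∀ t : ℝ, 0 ≤ t →
      (E (u t) - Elim) ^ (1 - α / 2) ≤ C * ‖gradient E (u t)‖) :
    ∀ t : ℝ, 0 < t → E (u t) - Elim ≤ (C ^ 2 / ((1 - α) * t)) ^ (1 / (1 - α)) := by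
  obtain ⟨hα0, hα1⟩ := hα
  have h1α : (0:ℝ) < 1 - α := by linarith
  set f : ℝ → ℝ := fun t => E (u t) - Elim with hfdef
  have hfpos : ∀ t, 0 ≤ t → 0 < f t := fun t ht => sub_pos.mpr (hgt t ht)
  -- derivative of f
  have hf' : ∀ t, 0 ≤ t → HasDerivAt f (-‖gradient E (u t)‖ ^ 2) t := by
    intro t ht
    have hg := (hE _ (hmem t ht)).hasGradientAt
    have h1 := (hg.hasFDerivAt.comp_hasDerivAt t (hflow t ht)).sub_const Elim
    have h2 : (InnerProductSpace.toDual ℝ H (gradient E (u t))) (-(gradient E (u t)))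
        = -‖gradient E (u t)‖ ^ 2 := by
      simp [real_inner_self_eq_norm_sq]
      rw [← InnerProductSpace.toDual_symm_apply, ← gradient, real_inner_self_eq_norm_sq]
    rwa [h2] at h1
  -- derivative of g := f ^ (α - 1)
  set c : ℝ := (1 - α) / C ^ 2 with hcdef
  have hcpos : 0 < c := div_pos h1α (by positivity)
  set g : ℝ → ℝ := fun t => f t ^ (α - 1) with hgdef
  have hg' : ∀ t, 0 ≤ t → HasDerivAt g
      (-‖gradient E (u t)‖ ^ 2 * (α - 1) * f t ^ (α - 1 - 1)) t := by
    intro t ht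
    exact (hf' t ht).rpow_const (Or.inl (hfpos t ht).ne')
  -- key derivative lower bound
  have hkey : ∀ t, 0 ≤ t → c ≤ -‖gradient E (u t)‖ ^ 2 * (α - 1) * f t ^ (α - 1 - 1) := by
    intro t ht
    have hfp := hfpos t ht
    have hl := hloj t ht
    have hsq : f t ^ (2 - α) ≤ C ^ 2 * ‖gradient E (u t)‖ ^ 2 := by
      have h0 : (0:ℝ) ≤ f t ^ (1 - α / 2) := (rpow_pos_of_pos hfp _).le
      have := mul_le_mul hl hl h0 (by positivity)
      calc f t ^ (2 - α) = f t ^ (1 - α/2) * f t ^ (1 - α/2) := by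
            rw [← rpow_add hfp]; ring_nf
        _ ≤ (C * ‖gradient E (u t)‖) * (C * ‖gradient E (u t)‖) := this
        _ = C ^ 2 * ‖gradient E (u t)‖ ^ 2 := by ring
    have hstep : f t ^ (2 - α) / C ^ 2 ≤ ‖gradient E (u t)‖ ^ 2 :=
      (div_le_iff₀ (by positivity)).mpr (by linarith [hsq])
    have hfpow : (0:ℝ) < f t ^ (2 - α) := rpow_pos_of_pos hfp _
    have hrw : -‖gradient E (u t)‖ ^ 2 * (α - 1) * f t ^ (α - 1 - 1)
        = (1 - α) * (‖gradient E (u t)‖ ^ 2 / f t ^ (2 - α)) := by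
      have : f t ^ (α - 1 - 1) = (f t ^ (2 - α))⁻¹ := by
        rw [← rpow_neg hfp.le]; ring_nf
      rw [this]; field_simp; ring
    rw [hrw, hcdef]
    have : 1 / C ^ 2 ≤ ‖gradient E (u t)‖ ^ 2 / f t ^ (2 - α) := by
      rw [div_le_div_iff₀ (by positivity) hfpow]
      calc 1 * f t ^ (2 - α) = f t ^ (2 - α) / C ^ 2 * C ^ 2 := by
            field_simp
        _ ≤ ‖gradient E (u t)‖ ^ 2 * C ^ 2 := by
            exact mul_le_mul_of_nonneg_right hstep (by positivity)
    calc (1 - α) / C ^ 2 = (1 - α) * (1 / C ^ 2) := by ring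
      _ ≤ (1 - α) * (‖gradient E (u t)‖ ^ 2 / f t ^ (2 - α)) :=
          mul_le_mul_of_nonneg_left this h1α.le
  -- φ t := g t - c * t is monotone on [0, ∞)
  set φ : ℝ → ℝ := fun t => g t - c * t with hφdef
  have hφ' : ∀ t, 0 ≤ t → HasDerivAt φ
      (-‖gradient E (u t)‖ ^ 2 * (α - 1) * f t ^ (α - 1 - 1) - c) t := by
    intro t ht
    have := (hg' t ht).sub (((hasDerivAt_id t).const_mul c))
    exact this.congr_deriv (by ring)
  have hmono : MonotoneOn φ (Set.Ici (0:ℝ)) := by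
    apply monotoneOn_of_deriv_nonneg (convex_Ici 0)
    · intro t ht
      exact ((hφ' t ht).continuousAt).continuousWithinAt
    · intro t ht
      rw [interior_Ici] at ht
      exact ((hφ' t (le_of_lt ht)).differentiableAt).differentiableWithinAt
    · intro t ht
      rw [interior_Ici] at ht
      rw [(hφ' t ht.le).deriv]
      have := hkey t ht.le
      linarith
  intro t ht
  have hmt := hmono (Set.self_mem_Ici) (Set.mem_Ici.mpr ht.le) ht.le
  have hg0 : 0 < g 0 := rpow_pos_of_pos (hfpos 0 le_rfl) _
  -- g t ≥ c * t
  have hgt' : c * t ≤ g t := by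
    have : g 0 - c * 0 ≤ g t - c * t := hmt
    simp only [mul_zero, sub_zero] at this
    linarith
  have hfp := hfpos t ht.le
  have hct : 0 < c * t := mul_pos hcpos ht
  -- f t ^ (1 - α) ≤ (c * t)⁻¹
  have hpow : f t ^ (1 - α) ≤ (c * t)⁻¹ := by
    have hginv : g t = (f t ^ (1 - α))⁻¹ := by
      rw [hgdef]
      simp only
      rw [← rpow_neg hfp.le]
      ring_nf
    rw [hginv] at hgt'
    have hfpow : (0:ℝ) < f t ^ (1 - α) := rpow_pos_of_pos hfp _
    rw [le_inv_comm₀ hct hfpow] at hgt'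
    exact hgt'
  -- conclude
  have hfin : f t ≤ ((c * t)⁻¹) ^ (1 / (1 - α)) := by
    have h1 : f t = (f t ^ (1 - α)) ^ (1 / (1 - α)) := by
      rw [← rpow_mul hfp.le, mul_one_div, div_self h1α.ne', rpow_one]
    rw [h1]
    exact rpow_le_rpow (rpow_pos_of_pos hfp _).le hpow (by positivity)
  have hrw : (c * t)⁻¹ = C ^ 2 / ((1 - α) * t) := by
    rw [hcdef]; field_simp
  rw [← hrw]
  exact hfin
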